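/- Let h, g, σ, p > 0 and define g(α) = log₂(1 + (1−α)·h·p/σ²) − log₂(1 + (1−α)·g·p/(α·g·p + σ²)) on [0,1]. Then any stationary point α* of g in (0,1) satisfies α* = 1/2 + (σ²/(2p))·(1/h − 1/g). -/

import Mathlib

theorem stmt_8 (h g σ p : ℝ) (hh : 0 < h) (hg : 0 < g) (hσ : 0 < σ) (hp : 0 < p)
    (G : ℝ → ℝ)
    (hG : ∀ α : ℝ, G α =
      Real.logb 2 (1 + (1 - α) * h * p / σ^2)
      - Real.logb 2 (1 + (1 - α) * g * p / (α * g * p + σ^2))) :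
    ∀ α ∈ Set.Ioo (0:ℝ) 1, deriv G α = 0 →
      α = 1 / 2 + (σ^2 / (2 * p)) * (1 / h - 1 / g) := by
  have hGfun : G = fun α => Real.logb 2 (1 + (1 - α) * h * p / σ^2)
      - Real.logb 2 (1 + (1 - α) * g * p / (α * g * p + σ^2)) := funext hG
  subst hGfun
  rintro α ⟨hα0, hα1⟩ hd
  have hs : (0:ℝ) < σ^2 := by positivity
  have hD : (0:ℝ) < α * g * p + σ^2 := by positivity
  have h1α : (0:ℝ) < 1 - α := by linarith
  have hA : (0:ℝ) < 1 + (1 - α) * h * p / σ^2 := by positivity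
  have hB : (0:ℝ) < 1 + (1 - α) * g * p / (α * g * p + σ^2) := by positivity
  -- derivative of first inner function
  have hf1 : HasDerivAt (fun x : ℝ => 1 + (1 - x) * h * p / σ^2) (-(h * p) / σ^2) α := by
    have : HasDerivAt (fun x : ℝ => (1 - x) * h * p) (-(h * p)) α := by
      have := ((hasDerivAt_const α (1:ℝ)).sub (hasDerivAt_id α)).mul_const h
      simpa using this.mul_const p
    simpa using (this.div_const (σ^2)).const_add 1
  have hf2 : HasDerivAt (fun x : ℝ => 1 + (1 - x) * g * p / (x * g * p + σ^2))
      ((-(g * p) * (α * g * p + σ^2) - (1 - α) * g * p * (g * p)) / (α * g * p + σ^2)^2) α := by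
    have hnum : HasDerivAt (fun x : ℝ => (1 - x) * g * p) (-(g * p)) α := by
      have := ((hasDerivAt_const α (1:ℝ)).sub (hasDerivAt_id α)).mul_const g
      simpa using this.mul_const p
    have hden : HasDerivAt (fun x : ℝ => x * g * p + σ^2) (g * p) α := by
      have := ((hasDerivAt_id α).mul_const g).mul_const p
      simpa using this.add_const (σ^2)
    exact (hnum.div hden hD.ne').const_add 1
  have hL1 : HasDerivAt (fun x : ℝ => Real.logb 2 (1 + (1 - x) * h * p / σ^2))
      ((-(h * p) / σ^2 / (1 + (1 - α) * h * p / σ^2)) / Real.log 2) α := by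
    have := (hf1.log hA.ne')
    simpa [Real.logb, div_eq_mul_inv] using this.div_const (Real.log 2)
  have hL2 : HasDerivAt (fun x : ℝ => Real.logb 2 (1 + (1 - x) * g * p / (x * g * p + σ^2)))
      (((-(g * p) * (α * g * p + σ^2) - (1 - α) * g * p * (g * p)) / (α * g * p + σ^2)^2
        / (1 + (1 - α) * g * p / (α * g * p + σ^2))) / Real.log 2) α := by
    have := (hf2.log hB.ne')
    simpa [Real.logb, div_eq_mul_inv] using this.div_const (Real.log 2)
  have hDG := (hL1.sub hL2).deriv
  simp only [Pi.sub_def] at hDG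
  rw [hDG] at hd
  have hlog2 : Real.log 2 ≠ 0 := (Real.log_pos (by norm_num)).ne'
  rw [div_sub_div_same, div_eq_zero_iff] at hd
  have key := hd.resolve_right hlog2
  have hkey : (-(h * p) / σ^2 / (1 + (1 - α) * h * p / σ^2))
      = ((-(g * p) * (α * g * p + σ^2) - (1 - α) * g * p * (g * p)) / (α * g * p + σ^2)^2
        / (1 + (1 - α) * g * p / (α * g * p + σ^2))) := by linarith [sub_eq_zero.mp key]
  have hhne := hh.ne'
  have hgne := hg.ne'
  have hpne := hp.ne'
  field_simp at hkey ⊢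
  have hc : h * (α * g * p + σ^2) = g * (σ^2 + (1 - α) * h * p) := by
    have hpos : (p * σ^2 * (g * p + σ^2) * (α * g * p + σ^2)) ≠ 0 := by positivity
    apply mul_left_cancel₀ hpos
    linear_combination (-(p * σ^2 * (α * g * p + σ^2))) * hkey
  linear_combination hc
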